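/- Take a_n = 1/(100 n³) and N = 4. Then for every integer m ≥ 1 and every bounded Lipschitz function f : [0,1) → ℂ, the iterated transfer operator satisfies ‖L^m f‖_Lip ≤ (3/4)^m ‖f‖_Lip + 4 ‖f‖_{C⁰}. -/

import Mathlib

open MeasureTheory Set Filter

noncomputable section

namespace Gouezel

/-- `b a n = 4 * ∑_{k=1}^n a_k` (left endpoints of the intervals `I_n`). -/
def b (a : ℕ → ℝ) (n : ℕ) : ℝ := 4 * ∑ k ∈ Finset.range n, a (k + 1)

/-- `b_∞ = 4 * ∑_{n=1}^∞ a_n`. -/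
def binf (a : ℕ → ℝ) : ℝ := 4 * ∑' n : ℕ, a (n + 1)

/-- The length `|J| = 1 - b_∞` of the interval `J = [b_∞, 1)`. -/
def lenJ (a : ℕ → ℝ) : ℝ := 1 - binf a

/-- `v_n'(x) = a_n (1 + 2 cos²(2π n⁴ x))`. -/
def vd (a : ℕ → ℝ) (n : ℕ) (x : ℝ) : ℝ :=
  a n * (1 + 2 * Real.cos (2 * Real.pi * (n : ℝ) ^ 4 * x) ^ 2)

/-- `w_n'(x) = a_n (1 + 2 sin²(2π n⁴ x))`. -/
def wd (a : ℕ → ℝ) (n : ℕ) (x : ℝ) : ℝ :=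
  a n * (1 + 2 * Real.sin (2 * Real.pi * (n : ℝ) ^ 4 * x) ^ 2)

/-- The inverse branch `v_n(x) = b_{n-1} + ∫_0^x v_n'(t) dt`. -/
def v (a : ℕ → ℝ) (n : ℕ) (x : ℝ) : ℝ := b a (n - 1) + ∫ t in (0:ℝ)..x, vd a n t

/-- The inverse branch `w_n(x) = b_{n-1} + 2 a_n + ∫_0^x w_n'(t) dt`. -/
def w (a : ℕ → ℝ) (n : ℕ) (x : ℝ) : ℝ :=
  b a (n - 1) + 2 * a n + ∫ t in (0:ℝ)..x, wd a n t

/-- The affine inverse branches `u_j(x) = b_∞ + (j-1)|J|/N + (|J|/N) x`, `1 ≤ j ≤ N`. -/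
def u (a : ℕ → ℝ) (N : ℕ) (j : ℕ) (x : ℝ) : ℝ :=
  binf a + ((j : ℝ) - 1) * (lenJ a / N) + (lenJ a / N) * x

/-- The transfer operator on complex-valued functions. -/
def L (a : ℕ → ℝ) (N : ℕ) (f : ℝ → ℂ) (x : ℝ) : ℂ :=
  (∑' n : ℕ, ((vd a (n + 1) x : ℂ) * f (v a (n + 1) x)
      + (wd a (n + 1) x : ℂ) * f (w a (n + 1) x)))
    + ((lenJ a / (N : ℝ) : ℝ) : ℂ) * ∑ j ∈ Finset.range N, f (u a N (j + 1) x)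

/-- The transfer operator on real-valued functions. -/
def LR (a : ℕ → ℝ) (N : ℕ) (f : ℝ → ℝ) (x : ℝ) : ℝ :=
  (∑' n : ℕ, (vd a (n + 1) x * f (v a (n + 1) x) + wd a (n + 1) x * f (w a (n + 1) x)))
    + (lenJ a / N) * ∑ j ∈ Finset.range N, f (u a N (j + 1) x)

/-- The part `L_n` of the transfer operator coming from the branches `v_n, w_n`. -/
def Ln (a : ℕ → ℝ) (n : ℕ) (f : ℝ → ℂ) (x : ℝ) : ℂ :=
  (vd a n x : ℂ) * f (v a n x) + (wd a n x : ℂ) * f (w a n x)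

/-- Sup norm of `f` on `[0,1)`. -/
def supNorm (f : ℝ → ℂ) : ℝ := ⨆ x : Ico (0:ℝ) 1, ‖f x.1‖

/-- Best Lipschitz constant of `f` on `[0,1)` (the term at `x = y` is `0/0 = 0`). -/
def lipConst (f : ℝ → ℂ) : ℝ :=
  ⨆ p : Ico (0:ℝ) 1 × Ico (0:ℝ) 1, ‖f p.1.1 - f p.2.1‖ / |p.1.1 - p.2.1|

/-- Lipschitz norm `‖f‖_Lip = sup|f| + Lip(f)` on `[0,1)`. -/
def lipNorm (f : ℝ → ℂ) : ℝ := supNorm f + lipConst f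

/-- `f` is bounded and Lipschitz on `[0,1)`. -/
def BddLip (f : ℝ → ℂ) : Prop :=
  ∃ K : ℝ, (∀ x ∈ Ico (0:ℝ) 1, ‖f x‖ ≤ K) ∧
    ∀ x ∈ Ico (0:ℝ) 1, ∀ y ∈ Ico (0:ℝ) 1, ‖f x - f y‖ ≤ K * |x - y|

/-- The specific choice `a_n = 1/(100 n³)`. -/
def aa (n : ℕ) : ℝ := 1 / (100 * (n : ℝ) ^ 3)

/-- Standing hypotheses on the sequence `(a_n)`: positivity and `∑ a_n < 1/4`. -/
def StdHyp (a : ℕ → ℝ) : Prop :=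
  (∀ n : ℕ, 1 ≤ n → 0 < a n) ∧ Summable (fun n : ℕ => a (n + 1)) ∧
    (∑' n : ℕ, a (n + 1)) < 1 / 4

/-- `T : [0,1) → [0,1)` has the maps `v_n, w_n` (`n ≥ 1`) and `u_j` (`1 ≤ j ≤ N`)
as inverse branches. -/
def InverseBranches (a : ℕ → ℝ) (N : ℕ) (T : ℝ → ℝ) : Prop :=
  MapsTo T (Ico (0:ℝ) 1) (Ico (0:ℝ) 1) ∧
    ∀ x ∈ Ico (0:ℝ) 1,
      (∀ n : ℕ, 1 ≤ n → T (v a n x) = x ∧ T (w a n x) = x) ∧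
      (∀ j : ℕ, 1 ≤ j → j ≤ N → T (u a N j x) = x)

lemma aa_pos {n : ℕ} (hn : 1 ≤ n) : 0 < aa n := by
  have h : (0:ℝ) < (n:ℝ) := by exact_mod_cast hn
  unfold aa; positivity

lemma aa_succ_pos (n : ℕ) : 0 < aa (n+1) := aa_pos (Nat.le_add_left 1 n)

lemma hasSum_tele : HasSum (fun n : ℕ => 1/(((n:ℝ)+1)*((n:ℝ)+2))) 1 := by
  have key : ∀ n : ℕ, ∑ i ∈ Finset.range n, 1/(((i:ℝ)+1)*((i:ℝ)+2)) = 1 - 1/((n:ℝ)+1) := by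
    intro n
    induction n with
    | zero => simp
    | succ k ih =>
      rw [Finset.sum_range_succ, ih]
      have h1 : ((k:ℝ)+1) ≠ 0 := by positivity
      have h2 : ((k:ℝ)+2) ≠ 0 := by positivity
      push_cast
      field_simp
      ring
  rw [hasSum_iff_tendsto_nat_of_nonneg (fun n => by positivity)]
  simp_rw [key]
  have := tendsto_one_div_add_atTop_nhds_zero_nat (𝕜 := ℝ)
  have h := Tendsto.const_sub (1:ℝ) this
  simpa using h

lemma summable_tele : Summable (fun n : ℕ => 1/(((n:ℝ)+1)*((n:ℝ)+2))) := hasSum_tele.summable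

lemma summable_sq : Summable (fun n : ℕ => 1/(((n:ℝ)+1)^2)) := by
  have := (Real.summable_one_div_nat_pow (p := 2)).mpr (by norm_num)
  have h := this.comp_injective (add_right_injective 1)
  simpa using (summable_nat_add_iff 1).mpr this

lemma tsum_sq_le : (∑' n : ℕ, 1/(((n:ℝ)+1)^2)) ≤ 2 := by
  have h : ∀ n : ℕ, 1/(((n:ℝ)+1)^2) ≤ 2 * (1/(((n:ℝ)+1)*((n:ℝ)+2))) := by
    intro n
    have h1 : (0:ℝ) < ((n:ℝ)+1)^2 := by positivity
    have h2 : (0:ℝ) < ((n:ℝ)+1)*((n:ℝ)+2) := by positivity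
    rw [mul_one_div, div_le_div_iff₀ h1 h2]
    nlinarith [Nat.cast_nonneg (α := ℝ) n]
  calc (∑' n : ℕ, 1/(((n:ℝ)+1)^2)) ≤ ∑' n : ℕ, 2 * (1/(((n:ℝ)+1)*((n:ℝ)+2))) :=
        Summable.tsum_le_tsum h summable_sq (summable_tele.mul_left 2)
    _ = 2 * 1 := by rw [tsum_mul_left, hasSum_tele.tsum_eq]
    _ = 2 := by norm_num

lemma aa_succ_eq (n : ℕ) : aa (n+1) = (1/100) * (1/(((n:ℝ)+1)^3)) := by
  unfold aa
  have h : ((n+1:ℕ):ℝ) = (n:ℝ)+1 := by push_cast; ring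
  rw [h]
  have h1 : ((n:ℝ)+1)^3 ≠ 0 := by positivity
  field_simp

lemma aa_succ_le_sq (n : ℕ) : aa (n+1) ≤ (1/100) * (1/(((n:ℝ)+1)^2)) := by
  rw [aa_succ_eq]
  have h1 : (0:ℝ) < ((n:ℝ)+1)^3 := by positivity
  have h2 : (0:ℝ) < ((n:ℝ)+1)^2 := by positivity
  have : 1/(((n:ℝ)+1)^3) ≤ 1/(((n:ℝ)+1)^2) := by
    rw [div_le_div_iff₀ h1 h2]; nlinarith [Nat.cast_nonneg (α := ℝ) n]
  nlinarith

lemma summable_aa : Summable (fun n : ℕ => aa (n+1)) := by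
  apply Summable.of_nonneg_of_le (fun n => (aa_succ_pos n).le)
    (fun n => aa_succ_le_sq n)
  exact summable_sq.mul_left _

lemma tsum_aa_le : (∑' n : ℕ, aa (n+1)) ≤ 2/100 := by
  calc (∑' n : ℕ, aa (n+1)) ≤ ∑' n : ℕ, (1/100) * (1/(((n:ℝ)+1)^2)) :=
        Summable.tsum_le_tsum aa_succ_le_sq summable_aa (summable_sq.mul_left _)
    _ = (1/100) * ∑' n : ℕ, 1/(((n:ℝ)+1)^2) := tsum_mul_left
    _ ≤ (1/100) * 2 := by nlinarith [tsum_sq_le]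
    _ = 2/100 := by norm_num


lemma binf_nonneg' : 0 ≤ binf aa := by
  unfold binf
  have : 0 ≤ ∑' n : ℕ, aa (n+1) := tsum_nonneg (fun n : ℕ => (aa_succ_pos n).le)
  linarith

lemma binf_le' : binf aa ≤ 8/100 := by
  unfold binf; nlinarith [tsum_aa_le]

lemma b_nonneg' (n : ℕ) : 0 ≤ b aa n := by
  unfold b
  have := Finset.sum_nonneg (fun k (_ : k ∈ Finset.range n) => (aa_succ_pos k).le)
  linarith

lemma b_succ' (n : ℕ) : b aa (n+1) = b aa n + 4 * aa (n+1) := by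
  unfold b; rw [Finset.sum_range_succ]; ring

lemma b_le_binf (n : ℕ) : b aa n ≤ binf aa := by
  unfold b binf
  have := Summable.sum_le_tsum (Finset.range n) (fun k _ => (aa_succ_pos k).le) summable_aa
  linarith


lemma cos_lip (A B : ℝ) : |Real.cos A - Real.cos B| ≤ |A - B| := by
  rw [Real.cos_sub_cos, abs_mul, abs_mul]
  have h1 : |Real.sin ((A+B)/2)| ≤ 1 :=
    abs_le.mpr ⟨Real.neg_one_le_sin _, Real.sin_le_one _⟩
  have h2 : |Real.sin ((A-B)/2)| ≤ |(A-B)/2| := Real.abs_sin_le_abs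
  have h3 : |(A-B)/2| = |A-B|/2 := by rw [abs_div]; norm_num
  have h4 : |(-2:ℝ)| = 2 := by norm_num
  rw [h4]
  calc 2 * |Real.sin ((A+B)/2)| * |Real.sin ((A-B)/2)|
      ≤ 2 * 1 * (|A-B|/2) := by
        apply mul_le_mul _ (h3 ▸ h2) (abs_nonneg _) (by positivity)
        nlinarith [abs_nonneg (Real.sin ((A+B)/2))]
    _ = |A-B| := by ring

lemma vd_add_wd (n : ℕ) (x : ℝ) : vd aa n x + wd aa n x = 4 * aa n := by
  unfold vd wd
  have h := Real.sin_sq_add_cos_sq (2 * Real.pi * (n:ℝ)^4 * x)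
  linear_combination 2 * aa n * h

lemma vd_eq (n : ℕ) (x : ℝ) :
    vd aa n x = aa n * (2 + Real.cos (2*(2 * Real.pi * (n:ℝ)^4 * x))) := by
  unfold vd; rw [Real.cos_sq]; ring

lemma vd_nonneg (n : ℕ) (x : ℝ) : 0 ≤ vd aa (n+1) x := by
  unfold vd
  nlinarith [aa_succ_pos n, sq_nonneg (Real.cos (2 * Real.pi * ((n+1:ℕ):ℝ)^4 * x))]

lemma vd_le (n : ℕ) (x : ℝ) : vd aa (n+1) x ≤ 3 * aa (n+1) := by
  unfold vd
  have h1 := Real.cos_sq_le_one (2 * Real.pi * ((n+1:ℕ):ℝ)^4 * x)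
  nlinarith [aa_succ_pos n]

lemma wd_nonneg (n : ℕ) (x : ℝ) : 0 ≤ wd aa (n+1) x := by
  unfold wd
  nlinarith [aa_succ_pos n, sq_nonneg (Real.sin (2 * Real.pi * ((n+1:ℕ):ℝ)^4 * x))]

lemma vd_ge (n : ℕ) (x : ℝ) : aa (n+1) ≤ vd aa (n+1) x := by
  unfold vd
  nlinarith [aa_succ_pos n, sq_nonneg (Real.cos (2 * Real.pi * ((n+1:ℕ):ℝ)^4 * x))]

lemma wd_le (n : ℕ) (x : ℝ) : wd aa (n+1) x ≤ 3 * aa (n+1) := by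
  have h := vd_add_wd (n+1) x
  have h2 := vd_ge n x
  linarith

lemma vd_lip (n : ℕ) (x y : ℝ) :
    |vd aa (n+1) x - vd aa (n+1) y| ≤ aa (n+1) * (4 * Real.pi * ((n+1:ℕ):ℝ)^4) * |x - y| := by
  have e : vd aa (n+1) x - vd aa (n+1) y
      = aa (n+1) * (Real.cos (2 * (2 * Real.pi * ((n+1:ℕ):ℝ)^4 * x))
        - Real.cos (2 * (2 * Real.pi * ((n+1:ℕ):ℝ)^4 * y))) := by
    unfold vd
    rw [Real.cos_sq, Real.cos_sq]
    ring
  rw [e, abs_mul, abs_of_pos (aa_succ_pos n)]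
  have h2 := cos_lip (2 * (2 * Real.pi * ((n+1:ℕ):ℝ)^4 * x))
    (2 * (2 * Real.pi * ((n+1:ℕ):ℝ)^4 * y))
  have h3 : |2 * (2 * Real.pi * ((n+1:ℕ):ℝ)^4 * x) - 2 * (2 * Real.pi * ((n+1:ℕ):ℝ)^4 * y)|
      = (4 * Real.pi * ((n+1:ℕ):ℝ)^4) * |x - y| := by
    rw [show 2 * (2 * Real.pi * ((n+1:ℕ):ℝ)^4 * x) - 2 * (2 * Real.pi * ((n+1:ℕ):ℝ)^4 * y)
        = (4 * Real.pi * ((n+1:ℕ):ℝ)^4) * (x - y) from by ring, abs_mul,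
      abs_of_pos (by positivity : (0:ℝ) < 4 * Real.pi * ((n+1:ℕ):ℝ)^4)]
  nlinarith [h2, h3, aa_succ_pos n, abs_nonneg (Real.cos (2 * (2 * Real.pi * ((n+1:ℕ):ℝ)^4 * x))
        - Real.cos (2 * (2 * Real.pi * ((n+1:ℕ):ℝ)^4 * y)))]

lemma cont_vd (n : ℕ) : Continuous (vd aa n) := by
  unfold vd; fun_prop

lemma cont_wd (n : ℕ) : Continuous (wd aa n) := by
  unfold wd; fun_prop

lemma intInt_vd (n : ℕ) (x y : ℝ) : IntervalIntegrable (vd aa n) volume x y :=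
  (cont_vd n).intervalIntegrable x y

lemma intInt_wd (n : ℕ) (x y : ℝ) : IntervalIntegrable (wd aa n) volume x y :=
  (cont_wd n).intervalIntegrable x y

lemma v_sub (n : ℕ) (x y : ℝ) : v aa n x - v aa n y = ∫ t in y..x, vd aa n t := by
  unfold v
  rw [add_sub_add_left_eq_sub]
  exact intervalIntegral.integral_interval_sub_left (intInt_vd n 0 x) (intInt_vd n 0 y)

lemma w_sub (n : ℕ) (x y : ℝ) : w aa n x - w aa n y = ∫ t in y..x, wd aa n t := by
  unfold w
  rw [add_sub_add_left_eq_sub]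
  exact intervalIntegral.integral_interval_sub_left (intInt_wd n 0 x) (intInt_wd n 0 y)

lemma v_lip (n : ℕ) (x y : ℝ) : |v aa (n+1) x - v aa (n+1) y| ≤ 3 * aa (n+1) * |x - y| := by
  rw [v_sub]
  have := intervalIntegral.norm_integral_le_of_norm_le_const
    (C := 3 * aa (n+1)) (f := vd aa (n+1)) (a := y) (b := x) ?_
  · simpa [Real.norm_eq_abs, abs_sub_comm x y] using this
  · intro t _
    rw [Real.norm_eq_abs, abs_of_nonneg (vd_nonneg n t)]
    exact vd_le n t

lemma w_lip (n : ℕ) (x y : ℝ) : |w aa (n+1) x - w aa (n+1) y| ≤ 3 * aa (n+1) * |x - y| := by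
  rw [w_sub]
  have := intervalIntegral.norm_integral_le_of_norm_le_const
    (C := 3 * aa (n+1)) (f := wd aa (n+1)) (a := y) (b := x) ?_
  · simpa [Real.norm_eq_abs, abs_sub_comm x y] using this
  · intro t _
    rw [Real.norm_eq_abs, abs_of_nonneg (wd_nonneg n t)]
    exact wd_le n t


lemma aa_le (n : ℕ) : aa (n+1) ≤ 1/100 := by
  rw [aa_succ_eq]
  have h1 : (0:ℝ) < ((n:ℝ)+1)^3 := by positivity
  have hn : (0:ℝ) ≤ (n:ℝ) := Nat.cast_nonneg n
  have h2 : (1:ℝ) ≤ ((n:ℝ)+1)^3 := by nlinarith [mul_nonneg (mul_nonneg hn hn) hn, mul_nonneg hn hn]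
  have h3 : 1/(((n:ℝ)+1)^3) ≤ 1 := by rw [div_le_one h1]; exact h2
  linarith

lemma key_lt (n : ℕ) : b aa n + 5 * aa (n+1) < 1 := by
  have h1 := b_succ' n
  have h2 := b_le_binf (n+1)
  have h3 := binf_le'
  have h4 := aa_le n
  linarith

lemma integral_vd_bounds (n : ℕ) {x : ℝ} (hx : x ∈ Ico (0:ℝ) 1) :
    0 ≤ (∫ t in (0:ℝ)..x, vd aa (n+1) t) ∧ (∫ t in (0:ℝ)..x, vd aa (n+1) t) ≤ 3 * aa (n+1) := by
  refine ⟨intervalIntegral.integral_nonneg hx.1 (fun t _ => vd_nonneg n t), ?_⟩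
  have h := intervalIntegral.norm_integral_le_of_norm_le_const
    (C := 3 * aa (n+1)) (f := vd aa (n+1)) (a := (0:ℝ)) (b := x)
    (fun t _ => by rw [Real.norm_eq_abs, abs_of_nonneg (vd_nonneg n t)]; exact vd_le n t)
  rw [Real.norm_eq_abs, sub_zero, abs_of_nonneg hx.1] at h
  have h2 : 3 * aa (n+1) * x ≤ 3 * aa (n+1) := by
    nlinarith [aa_succ_pos n, hx.1, hx.2]
  have h3 := le_abs_self (∫ t in (0:ℝ)..x, vd aa (n+1) t)
  linarith

lemma integral_wd_bounds (n : ℕ) {x : ℝ} (hx : x ∈ Ico (0:ℝ) 1) :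
    0 ≤ (∫ t in (0:ℝ)..x, wd aa (n+1) t) ∧ (∫ t in (0:ℝ)..x, wd aa (n+1) t) ≤ 3 * aa (n+1) := by
  refine ⟨intervalIntegral.integral_nonneg hx.1 (fun t _ => wd_nonneg n t), ?_⟩
  have h := intervalIntegral.norm_integral_le_of_norm_le_const
    (C := 3 * aa (n+1)) (f := wd aa (n+1)) (a := (0:ℝ)) (b := x)
    (fun t _ => by rw [Real.norm_eq_abs, abs_of_nonneg (wd_nonneg n t)]; exact wd_le n t)
  rw [Real.norm_eq_abs, sub_zero, abs_of_nonneg hx.1] at h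
  have h2 : 3 * aa (n+1) * x ≤ 3 * aa (n+1) := by
    nlinarith [aa_succ_pos n, hx.1, hx.2]
  have h3 := le_abs_self (∫ t in (0:ℝ)..x, wd aa (n+1) t)
  linarith

lemma v_mem (n : ℕ) {x : ℝ} (hx : x ∈ Ico (0:ℝ) 1) : v aa (n+1) x ∈ Ico (0:ℝ) 1 := by
  obtain ⟨hI0, hI1⟩ := integral_vd_bounds n hx
  have hb0 := b_nonneg' n
  have hk := key_lt n
  have ha := aa_succ_pos n
  unfold v
  simp only [Nat.add_sub_cancel]
  constructor
  · linarith
  · linarith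

lemma w_mem (n : ℕ) {x : ℝ} (hx : x ∈ Ico (0:ℝ) 1) : w aa (n+1) x ∈ Ico (0:ℝ) 1 := by
  obtain ⟨hI0, hI1⟩ := integral_wd_bounds n hx
  have hb0 := b_nonneg' n
  have hk := key_lt n
  have ha := aa_succ_pos n
  unfold w
  simp only [Nat.add_sub_cancel]
  constructor
  · linarith
  · linarith

lemma wv_diff (n : ℕ) {x : ℝ} (hx : x ∈ Ico (0:ℝ) 1) :
    |w aa (n+1) x - v aa (n+1) x| ≤ 4 * aa (n+1) := by
  have e : w aa (n+1) x - v aa (n+1) x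
      = 2 * aa (n+1) + ∫ t in (0:ℝ)..x, (wd aa (n+1) t - vd aa (n+1) t) := by
    unfold w v
    rw [intervalIntegral.integral_sub (intInt_wd (n+1) 0 x) (intInt_vd (n+1) 0 x)]
    ring
  have hb : |∫ t in (0:ℝ)..x, (wd aa (n+1) t - vd aa (n+1) t)| ≤ 2 * aa (n+1) := by
    have h := intervalIntegral.norm_integral_le_of_norm_le_const
      (C := 2 * aa (n+1)) (f := fun t => wd aa (n+1) t - vd aa (n+1) t) (a := (0:ℝ)) (b := x) ?_
    · rw [Real.norm_eq_abs, sub_zero, abs_of_nonneg hx.1] at h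
      have h2 : 2 * aa (n+1) * x ≤ 2 * aa (n+1) := by
        nlinarith [aa_succ_pos n, hx.1, hx.2]
      linarith
    · intro t _
      rw [Real.norm_eq_abs]
      show |wd aa (n+1) t - vd aa (n+1) t| ≤ 2 * aa (n+1)
      rw [abs_le]
      unfold wd vd
      have hs := Real.sin_sq_add_cos_sq (2 * Real.pi * ((n+1:ℕ):ℝ)^4 * t)
      have h1 := sq_nonneg (Real.sin (2 * Real.pi * ((n+1:ℕ):ℝ)^4 * t))
      have h2 := sq_nonneg (Real.cos (2 * Real.pi * ((n+1:ℕ):ℝ)^4 * t))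
      have ha := aa_succ_pos n
      constructor <;> nlinarith
  rw [e]
  have := abs_add_le (2 * aa (n+1)) (∫ t in (0:ℝ)..x, (wd aa (n+1) t - vd aa (n+1) t))
  have ha := aa_succ_pos n
  rw [abs_of_pos (by linarith : (0:ℝ) < 2 * aa (n+1))] at this
  linarith

lemma lenJ_pos : 0 < lenJ aa := by
  unfold lenJ
  have := binf_le'
  linarith

lemma lenJ_le_one : lenJ aa ≤ 1 := by
  unfold lenJ
  have := binf_nonneg'
  linarith

lemma u_sub (j : ℕ) (x y : ℝ) : u aa 4 j x - u aa 4 j y = (lenJ aa / 4) * (x - y) := by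
  unfold u
  push_cast
  ring

lemma u_mem (j : ℕ) (hj : j < 4) {x : ℝ} (hx : x ∈ Ico (0:ℝ) 1) :
    u aa 4 (j+1) x ∈ Ico (0:ℝ) 1 := by
  have hJ := lenJ_pos
  have hb0 := binf_nonneg'
  have hjr : ((j:ℝ)) ≤ 3 := by exact_mod_cast Nat.lt_succ_iff.mp hj
  have hjr0 : (0:ℝ) ≤ (j:ℝ) := Nat.cast_nonneg j
  have e : u aa 4 (j+1) x = binf aa + (j:ℝ) * (lenJ aa / 4) + (lenJ aa / 4) * x := by
    unfold u
    push_cast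
    ring
  have hlen : binf aa + lenJ aa = 1 := by unfold lenJ; ring
  rw [e]
  constructor
  · nlinarith [hx.1]
  · nlinarith [hx.2]


lemma Tn_bound_sup (f : ℝ → ℂ) (S : ℝ) (hfS : ∀ z ∈ Ico (0:ℝ) 1, ‖f z‖ ≤ S)
    {x : ℝ} (hx : x ∈ Ico (0:ℝ) 1) (n : ℕ) :
    ‖(vd aa (n+1) x : ℂ) * f (v aa (n+1) x) + (wd aa (n+1) x : ℂ) * f (w aa (n+1) x)‖
      ≤ 4 * aa (n+1) * S := by
  have h1 : ‖(vd aa (n+1) x : ℂ) * f (v aa (n+1) x)‖ ≤ vd aa (n+1) x * S := by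
    rw [norm_mul, Complex.norm_real, Real.norm_eq_abs, abs_of_nonneg (vd_nonneg n x)]
    exact mul_le_mul_of_nonneg_left (hfS _ (v_mem n hx)) (vd_nonneg n x)
  have h2 : ‖(wd aa (n+1) x : ℂ) * f (w aa (n+1) x)‖ ≤ wd aa (n+1) x * S := by
    rw [norm_mul, Complex.norm_real, Real.norm_eq_abs, abs_of_nonneg (wd_nonneg n x)]
    exact mul_le_mul_of_nonneg_left (hfS _ (w_mem n hx)) (wd_nonneg n x)
  have h3 := norm_add_le ((vd aa (n+1) x : ℂ) * f (v aa (n+1) x))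
    ((wd aa (n+1) x : ℂ) * f (w aa (n+1) x))
  have h4 : vd aa (n+1) x * S + wd aa (n+1) x * S = 4 * aa (n+1) * S := by
    have := vd_add_wd (n+1) x
    linear_combination S * this
  linarith

lemma summable_T (f : ℝ → ℂ) (S : ℝ) (hfS : ∀ z ∈ Ico (0:ℝ) 1, ‖f z‖ ≤ S)
    {x : ℝ} (hx : x ∈ Ico (0:ℝ) 1) :
    Summable (fun n : ℕ => (vd aa (n+1) x : ℂ) * f (v aa (n+1) x)
      + (wd aa (n+1) x : ℂ) * f (w aa (n+1) x)) :=
  Summable.of_norm_bounded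
    (((summable_aa.mul_left 4).mul_right S)) (Tn_bound_sup f S hfS hx)

lemma cN : ((4:ℕ) : ℝ) = 4 := by norm_num

lemma step_sup (f : ℝ → ℂ) (S : ℝ) (hS : 0 ≤ S) (hfS : ∀ z ∈ Ico (0:ℝ) 1, ‖f z‖ ≤ S)
    {x : ℝ} (hx : x ∈ Ico (0:ℝ) 1) : ‖L aa 4 f x‖ ≤ S := by
  unfold L
  have hnorm : Summable (fun n : ℕ => ‖(vd aa (n+1) x : ℂ) * f (v aa (n+1) x)
      + (wd aa (n+1) x : ℂ) * f (w aa (n+1) x)‖) :=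
    Summable.of_nonneg_of_le (fun n => norm_nonneg _) (Tn_bound_sup f S hfS hx)
      ((summable_aa.mul_left 4).mul_right S)
  have h1 : ‖∑' n : ℕ, ((vd aa (n+1) x : ℂ) * f (v aa (n+1) x)
      + (wd aa (n+1) x : ℂ) * f (w aa (n+1) x))‖ ≤ binf aa * S := by
    calc ‖∑' n : ℕ, ((vd aa (n+1) x : ℂ) * f (v aa (n+1) x)
        + (wd aa (n+1) x : ℂ) * f (w aa (n+1) x))‖
        ≤ ∑' n : ℕ, ‖(vd aa (n+1) x : ℂ) * f (v aa (n+1) x)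
          + (wd aa (n+1) x : ℂ) * f (w aa (n+1) x)‖ := norm_tsum_le_tsum_norm hnorm
      _ ≤ ∑' n : ℕ, 4 * aa (n+1) * S :=
          Summable.tsum_le_tsum (Tn_bound_sup f S hfS hx) hnorm ((summable_aa.mul_left 4).mul_right S)
      _ = binf aa * S := by
          rw [show (fun n : ℕ => 4 * aa (n+1) * S) = fun n : ℕ => aa (n+1) * (4 * S) from
            funext fun n => by ring, tsum_mul_right]
          unfold binf
          ring
  have h2 : ‖((lenJ aa / ((4:ℕ):ℝ) : ℝ) : ℂ) * ∑ j ∈ Finset.range 4, f (u aa 4 (j+1) x)‖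
      ≤ lenJ aa * S := by
    rw [norm_mul, Complex.norm_real, Real.norm_eq_abs, cN,
      abs_of_pos (by linarith [lenJ_pos] : (0:ℝ) < lenJ aa / 4)]
    have h3 : ‖∑ j ∈ Finset.range 4, f (u aa 4 (j+1) x)‖ ≤ 4 * S := by
      calc ‖∑ j ∈ Finset.range 4, f (u aa 4 (j+1) x)‖
          ≤ ∑ j ∈ Finset.range 4, ‖f (u aa 4 (j+1) x)‖ := norm_sum_le _ _
        _ ≤ ∑ j ∈ Finset.range 4, S := Finset.sum_le_sum
            (fun j hj => hfS _ (u_mem j (Finset.mem_range.mp hj) hx))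
        _ = 4 * S := by simp [Finset.sum_const]
    nlinarith [lenJ_pos, norm_nonneg (∑ j ∈ Finset.range 4, f (u aa 4 (j+1) x))]
  have h0 := norm_add_le (∑' n : ℕ, ((vd aa (n+1) x : ℂ) * f (v aa (n+1) x)
      + (wd aa (n+1) x : ℂ) * f (w aa (n+1) x)))
    (((lenJ aa / ((4:ℕ):ℝ) : ℝ) : ℂ) * ∑ j ∈ Finset.range 4, f (u aa 4 (j+1) x))
  have hJ : binf aa * S + lenJ aa * S = S := by unfold lenJ; ring
  calc ‖_ + _‖ ≤ _ + _ := h0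
    _ ≤ binf aa * S + lenJ aa * S := add_le_add h1 h2
    _ = S := hJ


lemma num_bound (n : ℕ) :
    18 * (aa (n+1))^2 + 16 * Real.pi * ((n+1:ℕ):ℝ)^4 * (aa (n+1))^2
      ≤ (7/1000) * (1/(((n:ℝ)+1)^2)) := by
  have hcast : ((n+1:ℕ):ℝ) = (n:ℝ)+1 := by push_cast; ring
  rw [aa_succ_eq, hcast]
  set t : ℝ := (n:ℝ)+1 with ht
  have ht1 : (1:ℝ) ≤ t := by
    have := Nat.cast_nonneg (α := ℝ) n
    rw [ht]; linarith
  have ht0 : (0:ℝ) < t := by linarith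
  have hpi : Real.pi ≤ 3.15 := Real.pi_lt_d2.le
  have hpi0 : 0 < Real.pi := Real.pi_pos
  have ht2 : (0:ℝ) < t^2 := by positivity
  have ht3 : (0:ℝ) < t^3 := by positivity
  have ht4 : (1:ℝ) ≤ t^4 := one_le_pow₀ ht1
  have e : (1/100 * (1/t^3))^2 = 1/(10000 * t^6) := by
    field_simp
    ring
  rw [e]
  have eq1 : 18 * (1/(10000 * t^6)) + 16 * Real.pi * t^4 * (1/(10000 * t^6))
      = (18 + 16 * Real.pi * t^4) / (10000 * t^6) := by ring
  have eq2 : (7:ℝ)/1000 * (1/t^2) = 70 * t^4 / (10000 * t^6) := by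
    field_simp
    ring
  rw [eq1, eq2]
  apply (div_le_div_iff_of_pos_right (by positivity : (0:ℝ) < 10000 * t^6)).mpr
  nlinarith [ht4, hpi, mul_le_mul_of_nonneg_right hpi (by positivity : (0:ℝ) ≤ t^4)]

lemma Tn_bound_lip (f : ℝ → ℂ) (K : ℝ) (hK : 0 ≤ K)
    (hfK : ∀ z ∈ Ico (0:ℝ) 1, ∀ z' ∈ Ico (0:ℝ) 1, ‖f z - f z'‖ ≤ K * |z - z'|)
    {x y : ℝ} (hx : x ∈ Ico (0:ℝ) 1) (hy : y ∈ Ico (0:ℝ) 1) (n : ℕ) :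
    ‖((vd aa (n+1) x : ℂ) * f (v aa (n+1) x) + (wd aa (n+1) x : ℂ) * f (w aa (n+1) x))
      - ((vd aa (n+1) y : ℂ) * f (v aa (n+1) y) + (wd aa (n+1) y : ℂ) * f (w aa (n+1) y))‖
      ≤ (7/1000) * (1/(((n:ℝ)+1)^2)) * (K * |x - y|) := by
  have ha := aa_succ_pos n
  have hBx : wd aa (n+1) x = 4 * aa (n+1) - vd aa (n+1) x := by
    linarith [vd_add_wd (n+1) x]
  have hBy : wd aa (n+1) y = 4 * aa (n+1) - vd aa (n+1) y := by
    linarith [vd_add_wd (n+1) y]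
  have id : ((vd aa (n+1) x : ℂ) * f (v aa (n+1) x) + (wd aa (n+1) x : ℂ) * f (w aa (n+1) x))
      - ((vd aa (n+1) y : ℂ) * f (v aa (n+1) y) + (wd aa (n+1) y : ℂ) * f (w aa (n+1) y))
      = (vd aa (n+1) x : ℂ) * (f (v aa (n+1) x) - f (v aa (n+1) y))
        + (wd aa (n+1) x : ℂ) * (f (w aa (n+1) x) - f (w aa (n+1) y))
        + ((vd aa (n+1) x : ℂ) - (vd aa (n+1) y : ℂ))
          * (f (v aa (n+1) y) - f (w aa (n+1) y)) := by
    rw [hBx, hBy]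
    push_cast
    ring
  rw [id]
  have e1 : ‖(vd aa (n+1) x : ℂ) * (f (v aa (n+1) x) - f (v aa (n+1) y))‖
      ≤ 9 * (aa (n+1))^2 * (K * |x - y|) := by
    rw [norm_mul, Complex.norm_real, Real.norm_eq_abs, abs_of_nonneg (vd_nonneg n x)]
    have hf := hfK _ (v_mem n hx) _ (v_mem n hy)
    have hv := v_lip n x y
    calc vd aa (n+1) x * ‖f (v aa (n+1) x) - f (v aa (n+1) y)‖
        ≤ (3 * aa (n+1)) * (K * (3 * aa (n+1) * |x - y|)) := by
          apply mul_le_mul (vd_le n x) _ (norm_nonneg _) (by linarith)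
          calc ‖f (v aa (n+1) x) - f (v aa (n+1) y)‖ ≤ K * |v aa (n+1) x - v aa (n+1) y| := hf
            _ ≤ K * (3 * aa (n+1) * |x - y|) := mul_le_mul_of_nonneg_left hv hK
      _ = 9 * (aa (n+1))^2 * (K * |x - y|) := by ring
  have e2 : ‖(wd aa (n+1) x : ℂ) * (f (w aa (n+1) x) - f (w aa (n+1) y))‖
      ≤ 9 * (aa (n+1))^2 * (K * |x - y|) := by
    rw [norm_mul, Complex.norm_real, Real.norm_eq_abs, abs_of_nonneg (wd_nonneg n x)]
    have hf := hfK _ (w_mem n hx) _ (w_mem n hy)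
    have hw := w_lip n x y
    calc wd aa (n+1) x * ‖f (w aa (n+1) x) - f (w aa (n+1) y)‖
        ≤ (3 * aa (n+1)) * (K * (3 * aa (n+1) * |x - y|)) := by
          apply mul_le_mul (wd_le n x) _ (norm_nonneg _) (by linarith)
          calc ‖f (w aa (n+1) x) - f (w aa (n+1) y)‖ ≤ K * |w aa (n+1) x - w aa (n+1) y| := hf
            _ ≤ K * (3 * aa (n+1) * |x - y|) := mul_le_mul_of_nonneg_left hw hK
      _ = 9 * (aa (n+1))^2 * (K * |x - y|) := by ring
  have e3 : ‖((vd aa (n+1) x : ℂ) - (vd aa (n+1) y : ℂ))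
      * (f (v aa (n+1) y) - f (w aa (n+1) y))‖
      ≤ 16 * Real.pi * ((n+1:ℕ):ℝ)^4 * (aa (n+1))^2 * (K * |x - y|) := by
    rw [norm_mul]
    have hnr : ‖(vd aa (n+1) x : ℂ) - (vd aa (n+1) y : ℂ)‖ = |vd aa (n+1) x - vd aa (n+1) y| := by
      rw [← Complex.ofReal_sub, Complex.norm_real, Real.norm_eq_abs]
    rw [hnr]
    have h1 := vd_lip n x y
    have h2 : ‖f (v aa (n+1) y) - f (w aa (n+1) y)‖ ≤ K * (4 * aa (n+1)) := by
      calc ‖f (v aa (n+1) y) - f (w aa (n+1) y)‖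
          ≤ K * |v aa (n+1) y - w aa (n+1) y| := hfK _ (v_mem n hy) _ (w_mem n hy)
        _ ≤ K * (4 * aa (n+1)) := by
            apply mul_le_mul_of_nonneg_left _ hK
            rw [abs_sub_comm]
            exact wv_diff n hy
    have hpi := Real.pi_pos
    calc |vd aa (n+1) x - vd aa (n+1) y| * ‖f (v aa (n+1) y) - f (w aa (n+1) y)‖
        ≤ (aa (n+1) * (4 * Real.pi * ((n+1:ℕ):ℝ)^4) * |x - y|) * (K * (4 * aa (n+1))) := by
          apply mul_le_mul h1 h2 (norm_nonneg _)
          positivity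
      _ = 16 * Real.pi * ((n+1:ℕ):ℝ)^4 * (aa (n+1))^2 * (K * |x - y|) := by ring
  have htot := norm_add_le ((vd aa (n+1) x : ℂ) * (f (v aa (n+1) x) - f (v aa (n+1) y))
      + (wd aa (n+1) x : ℂ) * (f (w aa (n+1) x) - f (w aa (n+1) y)))
    (((vd aa (n+1) x : ℂ) - (vd aa (n+1) y : ℂ)) * (f (v aa (n+1) y) - f (w aa (n+1) y)))
  have htot2 := norm_add_le ((vd aa (n+1) x : ℂ) * (f (v aa (n+1) x) - f (v aa (n+1) y)))
    ((wd aa (n+1) x : ℂ) * (f (w aa (n+1) x) - f (w aa (n+1) y)))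
  have hnum := num_bound n
  have hKxy : 0 ≤ K * |x - y| := mul_nonneg hK (abs_nonneg _)
  nlinarith [htot, htot2, e1, e2, e3, hnum, hKxy]


lemma summable_bound_lip (K d : ℝ) :
    Summable (fun n : ℕ => (7/1000) * (1/(((n:ℝ)+1)^2)) * (K * d)) := by
  have := summable_sq.mul_left (7/1000)
  exact this.mul_right (K * d)

lemma step_lip (f : ℝ → ℂ) (S K : ℝ) (hS : 0 ≤ S) (hK : 0 ≤ K)
    (hfS : ∀ z ∈ Ico (0:ℝ) 1, ‖f z‖ ≤ S)
    (hfK : ∀ z ∈ Ico (0:ℝ) 1, ∀ z' ∈ Ico (0:ℝ) 1, ‖f z - f z'‖ ≤ K * |z - z'|)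
    {x y : ℝ} (hx : x ∈ Ico (0:ℝ) 1) (hy : y ∈ Ico (0:ℝ) 1) :
    ‖L aa 4 f x - L aa 4 f y‖ ≤ (3/4 * K) * |x - y| := by
  have hsx := summable_T f S hfS hx
  have hsy := summable_T f S hfS hy
  have hKxy : 0 ≤ K * |x - y| := mul_nonneg hK (abs_nonneg _)
  set Tx : ℕ → ℂ := fun n => (vd aa (n+1) x : ℂ) * f (v aa (n+1) x)
      + (wd aa (n+1) x : ℂ) * f (w aa (n+1) x) with hTx
  set Ty : ℕ → ℂ := fun n => (vd aa (n+1) y : ℂ) * f (v aa (n+1) y)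
      + (wd aa (n+1) y : ℂ) * f (w aa (n+1) y) with hTy
  have hsub : Summable (fun n => Tx n - Ty n) := hsx.sub hsy
  have hnormsub : Summable (fun n : ℕ => ‖Tx n - Ty n‖) :=
    Summable.of_nonneg_of_le (fun n => norm_nonneg _)
      (fun n => Tn_bound_lip f K hK hfK hx hy n) (summable_bound_lip K |x - y|)
  have hLd : L aa 4 f x - L aa 4 f y
      = (∑' n : ℕ, (Tx n - Ty n))
        + ((lenJ aa / ((4:ℕ):ℝ) : ℝ) : ℂ)
          * ∑ j ∈ Finset.range 4, (f (u aa 4 (j+1) x) - f (u aa 4 (j+1) y)) := by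
    unfold L
    rw [Summable.tsum_sub hsx hsy, Finset.sum_sub_distrib]
    ring
  rw [hLd]
  have h1 : ‖∑' n : ℕ, (Tx n - Ty n)‖ ≤ (14/1000) * (K * |x - y|) := by
    calc ‖∑' n : ℕ, (Tx n - Ty n)‖ ≤ ∑' n : ℕ, ‖Tx n - Ty n‖ := norm_tsum_le_tsum_norm hnormsub
      _ ≤ ∑' n : ℕ, (7/1000) * (1/(((n:ℝ)+1)^2)) * (K * |x - y|) :=
          Summable.tsum_le_tsum (fun n => Tn_bound_lip f K hK hfK hx hy n) hnormsub
            (summable_bound_lip K |x - y|)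
      _ ≤ (14/1000) * (K * |x - y|) := by
          rw [show (fun n : ℕ => (7/1000) * (1/(((n:ℝ)+1)^2)) * (K * |x - y|))
              = fun n : ℕ => (1/(((n:ℝ)+1)^2)) * ((7/1000) * (K * |x - y|)) from
            funext fun n => by ring, tsum_mul_right]
          have h2 := tsum_sq_le
          nlinarith [hKxy]
  have h2 : ‖((lenJ aa / ((4:ℕ):ℝ) : ℝ) : ℂ)
      * ∑ j ∈ Finset.range 4, (f (u aa 4 (j+1) x) - f (u aa 4 (j+1) y))‖
      ≤ (1/4) * (K * |x - y|) := by
    rw [norm_mul, Complex.norm_real, Real.norm_eq_abs, cN,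
      abs_of_pos (by linarith [lenJ_pos] : (0:ℝ) < lenJ aa / 4)]
    have hterm : ∀ j ∈ Finset.range 4,
        ‖f (u aa 4 (j+1) x) - f (u aa 4 (j+1) y)‖ ≤ K * ((lenJ aa / 4) * |x - y|) := by
      intro j hj
      have hj4 := Finset.mem_range.mp hj
      calc ‖f (u aa 4 (j+1) x) - f (u aa 4 (j+1) y)‖
          ≤ K * |u aa 4 (j+1) x - u aa 4 (j+1) y| := hfK _ (u_mem j hj4 hx) _ (u_mem j hj4 hy)
        _ = K * ((lenJ aa / 4) * |x - y|) := by
            rw [u_sub, abs_mul, abs_of_pos (by linarith [lenJ_pos] : (0:ℝ) < lenJ aa / 4)]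
    have hsum : ‖∑ j ∈ Finset.range 4, (f (u aa 4 (j+1) x) - f (u aa 4 (j+1) y))‖
        ≤ 4 * (K * ((lenJ aa / 4) * |x - y|)) := by
      calc ‖∑ j ∈ Finset.range 4, (f (u aa 4 (j+1) x) - f (u aa 4 (j+1) y))‖
          ≤ ∑ j ∈ Finset.range 4, ‖f (u aa 4 (j+1) x) - f (u aa 4 (j+1) y)‖ := norm_sum_le _ _
        _ ≤ ∑ j ∈ Finset.range 4, K * ((lenJ aa / 4) * |x - y|) := Finset.sum_le_sum hterm
        _ = 4 * (K * ((lenJ aa / 4) * |x - y|)) := by simp [Finset.sum_const]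
    have hJ1 := lenJ_pos
    have hJ2 := lenJ_le_one
    calc lenJ aa / 4 * ‖∑ j ∈ Finset.range 4, (f (u aa 4 (j+1) x) - f (u aa 4 (j+1) y))‖
        ≤ lenJ aa / 4 * (4 * (K * ((lenJ aa / 4) * |x - y|))) :=
          mul_le_mul_of_nonneg_left hsum (by linarith)
      _ = (lenJ aa)^2 / 4 * (K * |x - y|) := by ring
      _ ≤ (1/4) * (K * |x - y|) := by
          have hsq : lenJ aa ^ 2 ≤ 1 := by nlinarith
          nlinarith [hKxy, hsq]
  calc ‖_ + _‖ ≤ _ + _ := norm_add_le _ _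
    _ ≤ (14/1000) * (K * |x - y|) + (1/4) * (K * |x - y|) := add_le_add h1 h2
    _ ≤ (3/4 * K) * |x - y| := by nlinarith


lemma iterate_bound (f : ℝ → ℂ) (S K : ℝ) (hS : 0 ≤ S) (hK : 0 ≤ K)
    (hfS : ∀ z ∈ Ico (0:ℝ) 1, ‖f z‖ ≤ S)
    (hfK : ∀ z ∈ Ico (0:ℝ) 1, ∀ z' ∈ Ico (0:ℝ) 1, ‖f z - f z'‖ ≤ K * |z - z'|)
    (m : ℕ) :
    (∀ z ∈ Ico (0:ℝ) 1, ‖(L aa 4)^[m] f z‖ ≤ S) ∧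
    (∀ z ∈ Ico (0:ℝ) 1, ∀ z' ∈ Ico (0:ℝ) 1,
      ‖(L aa 4)^[m] f z - (L aa 4)^[m] f z'‖ ≤ ((3/4:ℝ)^m * K) * |z - z'|) := by
  induction m with
  | zero =>
    simp only [Function.iterate_zero, id_eq, pow_zero, one_mul]
    exact ⟨hfS, hfK⟩
  | succ k ih =>
    obtain ⟨ihS, ihK⟩ := ih
    have hKk : 0 ≤ (3/4:ℝ)^k * K := mul_nonneg (by positivity) hK
    constructor
    · intro z hz
      rw [Function.iterate_succ_apply']
      exact step_sup ((L aa 4)^[k] f) S hS ihS hz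
    · intro z hz z' hz'
      rw [Function.iterate_succ_apply']
      have hst := step_lip ((L aa 4)^[k] f) S ((3/4:ℝ)^k * K) hS hKk ihS ihK hz hz'
      calc ‖L aa 4 ((L aa 4)^[k] f) z - L aa 4 ((L aa 4)^[k] f) z'‖
          ≤ (3/4 * ((3/4:ℝ)^k * K)) * |z - z'| := hst
        _ = ((3/4:ℝ)^(k+1) * K) * |z - z'| := by ring

/-- with `a_n = 1/(100 n³)` and `N = 4`, for every `m ≥ 1`,
`‖L^m f‖_Lip ≤ (3/4)^m ‖f‖_Lip + 4 ‖f‖_{C⁰}`. -/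
theorem stmt12 (m : ℕ) (hm : 1 ≤ m) (f : ℝ → ℂ) (hf : BddLip f) :
    lipNorm ((L aa 4)^[m] f) ≤ (3 / 4 : ℝ) ^ m * lipNorm f + 4 * supNorm f := by
  obtain ⟨K0, hK0S, hK0L⟩ := hf
  have h0mem : (0:ℝ) ∈ Ico (0:ℝ) 1 := by constructor <;> norm_num
  have hK0 : 0 ≤ K0 := le_trans (norm_nonneg _) (hK0S 0 h0mem)
  haveI hne : Nonempty (Ico (0:ℝ) 1) := ⟨⟨0, h0mem⟩⟩
  have hbddS : BddAbove (Set.range fun z : Ico (0:ℝ) 1 => ‖f z.1‖) := by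
    refine ⟨K0, ?_⟩
    rintro r ⟨z, rfl⟩
    exact hK0S z.1 z.2
  have hfS : ∀ z ∈ Ico (0:ℝ) 1, ‖f z‖ ≤ supNorm f := by
    intro z hz
    exact le_ciSup hbddS ⟨z, hz⟩
  have hS : 0 ≤ supNorm f := le_trans (norm_nonneg _) (hfS 0 h0mem)
  have hbddK : BddAbove (Set.range fun p : (Ico (0:ℝ) 1) × (Ico (0:ℝ) 1) =>
      ‖f p.1.1 - f p.2.1‖ / |p.1.1 - p.2.1|) := by
    refine ⟨K0, ?_⟩
    rintro r ⟨p, rfl⟩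
    by_cases h : p.1.1 = p.2.1
    · simp [h, hK0]
    · have habs : 0 < |p.1.1 - p.2.1| := abs_pos.mpr (sub_ne_zero.mpr h)
      rw [div_le_iff₀ habs]
      exact hK0L p.1.1 p.1.2 p.2.1 p.2.2
  have hK : 0 ≤ lipConst f := by
    have h0 := le_ciSup hbddK (⟨⟨0, h0mem⟩, ⟨0, h0mem⟩⟩ :
      (Ico (0:ℝ) 1) × (Ico (0:ℝ) 1))
    simpa [lipConst] using h0
  have hfK : ∀ z ∈ Ico (0:ℝ) 1, ∀ z' ∈ Ico (0:ℝ) 1,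
      ‖f z - f z'‖ ≤ lipConst f * |z - z'| := by
    intro z hz z' hz'
    by_cases h : z = z'
    · simp [h]
    · have habs : 0 < |z - z'| := abs_pos.mpr (sub_ne_zero.mpr h)
      have hle := le_ciSup hbddK (⟨⟨z, hz⟩, ⟨z', hz'⟩⟩ :
        (Ico (0:ℝ) 1) × (Ico (0:ℝ) 1))
      exact (div_le_iff₀ habs).mp hle
  obtain ⟨hgS, hgK⟩ := iterate_bound f (supNorm f) (lipConst f) hS hK hfS hfK m
  have hpow : (0:ℝ) ≤ (3/4:ℝ)^m := by positivity
  have hpow1 : (3/4:ℝ)^m ≤ 1 := pow_le_one₀ (by norm_num) (by norm_num)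
  have hSm : supNorm ((L aa 4)^[m] f) ≤ supNorm f := by
    apply ciSup_le
    intro z
    exact hgS z.1 z.2
  have hKm : lipConst ((L aa 4)^[m] f) ≤ (3/4:ℝ)^m * lipConst f := by
    apply ciSup_le
    intro p
    by_cases h : p.1.1 = p.2.1
    · simp only [h, sub_self, norm_zero, abs_zero, div_zero]
      exact mul_nonneg hpow hK
    · have habs : 0 < |p.1.1 - p.2.1| := abs_pos.mpr (sub_ne_zero.mpr h)
      rw [div_le_iff₀ habs]
      exact hgK p.1.1 p.1.2 p.2.1 p.2.2
  unfold lipNorm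
  nlinarith [hSm, hKm, hS, hK, hpow, hpow1]


end Gouezel
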